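/- Let u_1, …, u_m be vectors in ℝ^{N_h} and let S ∈ ℝ^{N_h × m} be the matrix whose j-th column is u_j, with singular value decomposition S = W Σ Zᵀ and singular values σ_1 ≥ σ_2 ≥ … . For every N ≤ min(N_h, m), the first N left singular vectors ζ_1, …, ζ_N (the first N columns of W) form an orthonormal family achieving E(ζ_1, …, ζ_N) = Σ_{i=N+1}^{min(N_h,m)} σ_i²; consequently they minimize the POD error functional E over all orthonormal families of size N in ℝ^{N_h}. -/

import Mathlib

open scoped BigOperators
open Matrix

local notation "⟪" x ", " y "⟫" => @inner ℝ _ _ x y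

private lemma pod_err_sq {F : Type*} [NormedAddCommGroup F] [InnerProductSpace ℝ F]
    [FiniteDimensional ℝ F] {N : ℕ} (z : Fin N → F) (hz : Orthonormal ℝ z) (v : F) :
    ‖v - (Submodule.orthogonalProjectionOnto (Submodule.span ℝ (Set.range z)) v : F)‖ ^ 2
      = ‖v‖ ^ 2 - ∑ k, ⟪z k, v⟫ ^ 2 := by
  set K := Submodule.span ℝ (Set.range z) with hK
  set q : F := ∑ k, ⟪z k, v⟫ • z k with hq
  have hqmem : q ∈ K := Submodule.sum_mem _ fun k _ =>
    Submodule.smul_mem _ _ (Submodule.subset_span ⟨k, rfl⟩)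
  have hproj : (Submodule.orthogonalProjectionOnto K v : F) = q := by
    apply Submodule.eq_starProjection_of_mem_of_inner_eq_zero hqmem
    intro x hx
    induction hx using Submodule.span_induction with
    | mem x hxx =>
      obtain ⟨l, rfl⟩ := hxx
      have : ⟪q, z l⟫ = ⟪z l, v⟫ := by
        rw [hq, real_inner_comm]
        rw [hz.inner_right_fintype (fun k => ⟪z k, v⟫)]
      rw [inner_sub_left, this, sub_eq_zero]
      exact real_inner_comm (z l) v
    | zero => simp
    | add x y _ _ hx hy => rw [inner_add_right, hx, hy]; ring
    | smul a x _ hx => rw [inner_smul_right, hx]; ring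
  rw [hproj]
  have hvq : ⟪v, q⟫ = ∑ k, ⟪z k, v⟫ ^ 2 := by
    rw [hq, inner_sum]
    refine Finset.sum_congr rfl fun k _ => ?_
    rw [real_inner_smul_right, real_inner_comm, sq]
  have hqq : ⟪q, q⟫ = ⟪v, q⟫ := by
    have h0 : ⟪v - q, q⟫ = 0 := by
      rw [← hproj]
      exact Submodule.starProjection_inner_eq_zero v _ (hproj ▸ hqmem)
    rw [inner_sub_left] at h0
    linarith
  have : ‖v - q‖ ^ 2 = ‖v‖ ^ 2 - 2 * ⟪v, q⟫ + ‖q‖ ^ 2 := norm_sub_sq_real v q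
  rw [this, ← real_inner_self_eq_norm_sq q, hqq, hvq]
  ring

private lemma pod_sum_mul_sum_comm {I R S : Type*} [Fintype I] [Fintype R] [Fintype S]
    (g : R → I → ℝ) (h : S → I → ℝ) :
    ∑ i, (∑ r, g r i) * (∑ s, h s i) = ∑ r, ∑ s, ∑ i, g r i * h s i := by
  simp_rw [Finset.sum_mul_sum]
  rw [Finset.sum_comm]
  exact Finset.sum_congr rfl fun r _ => Finset.sum_comm

private lemma pod_range_cut (f : ℕ → ℝ) {N M : ℕ} (hNM : N ≤ M) (hf : ∀ i, N ≤ i → f i = 0) :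
    ∑ i ∈ Finset.range M, f i = ∑ i ∈ Finset.range N, f i := by
  symm
  apply Finset.sum_subset (Finset.range_subset_range.mpr hNM)
  intro x _ hx
  rw [Finset.mem_range] at hx
  exact hf x (not_lt.mp hx)

set_option maxHeartbeats 1600000 in
/-- **Optimality of the POD basis.** The first `N` left singular vectors
`ζ₁, …, ζ_N` of the snapshot matrix `S` (the first `N` columns of the orthogonal
factor `W` in an SVD `S = W Σ Zᵀ`) form an orthonormal family, achieve
`E(ζ₁, …, ζ_N) = ∑_{i>N} σᵢ²`, and hence minimize the POD error functional
over all orthonormal families of size `N` in `ℝ^{N_h}`. -/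
theorem pod_basis_optimality
    (Nh m : ℕ) (u : Fin m → EuclideanSpace ℝ (Fin Nh))
    (S : Matrix (Fin Nh) (Fin m) ℝ) (hS : ∀ i j, S i j = u j i)
    (σ : Fin (min Nh m) → ℝ) (hσ_nonneg : ∀ i, 0 ≤ σ i) (hσ_anti : Antitone σ)
    (W : Matrix (Fin Nh) (Fin Nh) ℝ) (Z : Matrix (Fin m) (Fin m) ℝ)
    (hW : W ∈ Matrix.orthogonalGroup (Fin Nh) ℝ)
    (hZ : Z ∈ Matrix.orthogonalGroup (Fin m) ℝ)
    (hSVD : S = W * (Matrix.of fun (i : Fin Nh) (j : Fin m) =>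
      if h : (i : ℕ) = (j : ℕ) ∧ (i : ℕ) < min Nh m then σ ⟨(i : ℕ), h.2⟩ else 0) * Zᵀ)
    (N : ℕ) (hN : N ≤ min Nh m)
    (ζ : Fin N → EuclideanSpace ℝ (Fin Nh))
    (hζ : ∀ (k : Fin N) (i : Fin Nh),
      ζ k i = W i ⟨(k : ℕ), lt_of_lt_of_le k.isLt (hN.trans (min_le_left Nh m))⟩) :
    Orthonormal ℝ ζ ∧
    (∑ j : Fin m,
        ‖u j - (Submodule.orthogonalProjectionOnto (Submodule.span ℝ (Set.range ζ)) (u j) :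
          EuclideanSpace ℝ (Fin Nh))‖ ^ 2) =
      (∑ i : Fin (min Nh m), if N ≤ (i : ℕ) then σ i ^ 2 else 0) ∧
    ∀ z : Fin N → EuclideanSpace ℝ (Fin Nh), Orthonormal ℝ z →
      (∑ j : Fin m,
          ‖u j - (Submodule.orthogonalProjectionOnto (Submodule.span ℝ (Set.range ζ)) (u j) :
            EuclideanSpace ℝ (Fin Nh))‖ ^ 2) ≤
        ∑ j : Fin m,
          ‖u j - (Submodule.orthogonalProjectionOnto (Submodule.span ℝ (Set.range z)) (u j) :
            EuclideanSpace ℝ (Fin Nh))‖ ^ 2 := by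
  classical
  have hNNh : N ≤ Nh := hN.trans (min_le_left Nh m)
  have euc_inner : ∀ x y : EuclideanSpace ℝ (Fin Nh), ⟪x, y⟫ = ∑ r, x r * y r := by
    intro x y
    simp [PiLp.inner_apply, RCLike.inner_apply, starRingEnd_apply]
    exact Finset.sum_congr rfl fun _ _ => mul_comm _ _
  have hWr : ∀ r s, ∑ i, W r i * W s i = if r = s then 1 else 0 := by
    intro r s
    have h := Matrix.mem_unitaryGroup_iff.mp hW
    have := congrArg (fun M => M r s) h
    simpa [Matrix.mul_apply, Matrix.star_apply, Matrix.one_apply] using this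
  have hWc : ∀ i i', ∑ r, W r i * W r i' = if i = i' then 1 else 0 := by
    intro i i'
    have h := Matrix.mem_unitaryGroup_iff'.mp hW
    have := congrArg (fun M => M i i') h
    simpa [Matrix.mul_apply, Matrix.star_apply, Matrix.one_apply, mul_comm] using this
  have hZc : ∀ t t', ∑ j, Z j t * Z j t' = if t = t' then 1 else 0 := by
    intro t t'
    have h := Matrix.mem_unitaryGroup_iff'.mp hZ
    have := congrArg (fun M => M t t') h
    simpa [Matrix.mul_apply, Matrix.star_apply, Matrix.one_apply, mul_comm] using this
  set w : Fin Nh → EuclideanSpace ℝ (Fin Nh) := fun i => WithLp.toLp 2 (fun r => W r i) with hwdef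
  have hwinner : ∀ i i', ⟪w i, w i'⟫ = if i = i' then 1 else 0 := by
    intro i i'
    rw [euc_inner]
    exact hWc i i'
  have horthw : Orthonormal ℝ w := by
    rw [orthonormal_iff_ite]
    intro i i'
    rw [← hwinner i i']
  have hPar : ∀ v v' : EuclideanSpace ℝ (Fin Nh),
      ∑ i, ⟪w i, v⟫ * ⟪w i, v'⟫ = ⟪v, v'⟫ := by
    intro v v'
    calc ∑ i, ⟪w i, v⟫ * ⟪w i, v'⟫
        = ∑ i, (∑ r, W r i * v r) * (∑ s, W s i * v' s) := by
          refine Finset.sum_congr rfl fun i _ => by rw [euc_inner, euc_inner]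
      _ = ∑ r, ∑ s, ∑ i, (W r i * v r) * (W s i * v' s) :=
          pod_sum_mul_sum_comm (fun r i => W r i * v r) (fun s i => W s i * v' s)
      _ = ∑ r, ∑ s, (v r * v' s) * ∑ i, W r i * W s i := by
          refine Finset.sum_congr rfl fun r _ => Finset.sum_congr rfl fun s _ => ?_
          rw [Finset.mul_sum]
          exact Finset.sum_congr rfl fun i _ => by ring
      _ = ∑ r, v r * v' r := by
          refine Finset.sum_congr rfl fun r _ => ?_
          simp [hWr, Finset.sum_ite_eq]
      _ = ⟪v, v'⟫ := (euc_inner v v').symm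
  set dnat : ℕ → ℝ := fun i => if h : i < min Nh m then σ ⟨i, h⟩ ^ 2 else 0 with hdnatdef
  have hdnn : ∀ i, 0 ≤ dnat i := by
    intro i
    simp only [hdnatdef]
    by_cases h : i < min Nh m
    · rw [dif_pos h]; exact sq_nonneg _
    · rw [dif_neg h]
  have hdmono : ∀ {i j : ℕ}, i ≤ j → dnat j ≤ dnat i := by
    intro i j hij
    by_cases hj : j < min Nh m
    · have hi : i < min Nh m := lt_of_le_of_lt hij hj
      simp only [hdnatdef, dif_pos hj, dif_pos hi]
      have h1 : σ ⟨j, hj⟩ ≤ σ ⟨i, hi⟩ := hσ_anti (by exact hij)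
      have h2 : 0 ≤ σ ⟨j, hj⟩ := hσ_nonneg _
      nlinarith
    · simp only [hdnatdef, dif_neg hj]
      exact hdnn i
  set aval : Fin Nh → Fin m → ℝ := fun i j =>
    if h : (i : ℕ) < min Nh m then
      σ ⟨(i : ℕ), h⟩ * Z j ⟨(i : ℕ), lt_of_lt_of_le h (min_le_right Nh m)⟩ else 0 with havaldef
  have hstarW : star W = Wᵀ := by
    ext i j; simp [Matrix.star_apply]
  have hWtW : Wᵀ * W = 1 := by
    rw [← hstarW]; exact Matrix.mem_unitaryGroup_iff'.mp hW
  have hWtS : Wᵀ * S = (Matrix.of fun (i : Fin Nh) (j : Fin m) =>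
      if h : (i : ℕ) = (j : ℕ) ∧ (i : ℕ) < min Nh m then σ ⟨(i : ℕ), h.2⟩ else 0) * Zᵀ := by
    rw [hSVD, ← Matrix.mul_assoc, ← Matrix.mul_assoc, hWtW, Matrix.one_mul]
  have ha : ∀ i j, ⟪w i, u j⟫ = aval i j := by
    intro i j
    have h1 : ⟪w i, u j⟫ = (Wᵀ * S) i j := by
      rw [euc_inner, Matrix.mul_apply]
      exact Finset.sum_congr rfl fun r _ => by rw [Matrix.transpose_apply, hS]
    rw [h1, hWtS, Matrix.mul_apply]
    by_cases h : (i : ℕ) < min Nh m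
    · rw [Finset.sum_eq_single (⟨(i : ℕ), lt_of_lt_of_le h (min_le_right Nh m)⟩ : Fin m)]
      · rw [Matrix.of_apply, Matrix.transpose_apply]
        have hc : (i : ℕ) = ((⟨(i : ℕ), lt_of_lt_of_le h (min_le_right Nh m)⟩ : Fin m) : ℕ)
            ∧ (i : ℕ) < min Nh m := ⟨rfl, h⟩
        rw [dif_pos hc]
        simp only [havaldef]
        rw [dif_pos h]
      · intro t _ ht
        rw [Matrix.of_apply, dif_neg, zero_mul]
        rintro ⟨hval, -⟩
        exact ht (Fin.ext hval.symm)
      · intro ht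
        exact absurd (Finset.mem_univ _) ht
    · simp only [havaldef]
      rw [dif_neg h]
      apply Finset.sum_eq_zero
      intro t _
      rw [Matrix.of_apply, dif_neg, zero_mul]
      rintro ⟨-, hlt⟩
      exact h hlt
  have hsum_aa : ∀ i i', ∑ j, aval i j * aval i' j = if i = i' then dnat (i : ℕ) else 0 := by
    intro i i'
    by_cases h : (i : ℕ) < min Nh m
    · by_cases h' : (i' : ℕ) < min Nh m
      · simp only [havaldef, dif_pos h, dif_pos h']
        have key : ∑ j, (σ ⟨(i : ℕ), h⟩ * Z j ⟨(i : ℕ), lt_of_lt_of_le h (min_le_right Nh m)⟩) *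
            (σ ⟨(i' : ℕ), h'⟩ * Z j ⟨(i' : ℕ), lt_of_lt_of_le h' (min_le_right Nh m)⟩)
            = σ ⟨(i : ℕ), h⟩ * σ ⟨(i' : ℕ), h'⟩ *
              ∑ j, Z j ⟨(i : ℕ), lt_of_lt_of_le h (min_le_right Nh m)⟩ *
                Z j ⟨(i' : ℕ), lt_of_lt_of_le h' (min_le_right Nh m)⟩ := by
          rw [Finset.mul_sum]
          exact Finset.sum_congr rfl fun j _ => by ring
        rw [key, hZc]
        by_cases hii : i = i'
        · subst hii
          rw [if_pos rfl, if_pos rfl]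
          simp only [hdnatdef]
          rw [dif_pos h]
          ring
        · have hv : (i : ℕ) ≠ (i' : ℕ) := fun hc => hii (Fin.ext hc)
          have hne : (⟨(i : ℕ), lt_of_lt_of_le h (min_le_right Nh m)⟩ : Fin m)
              ≠ ⟨(i' : ℕ), lt_of_lt_of_le h' (min_le_right Nh m)⟩ :=
            fun hc => hv (Fin.mk_eq_mk.mp hc)
          rw [if_neg hne, if_neg hii]
          ring
      · have hii : i ≠ i' := fun hc => h' (hc ▸ h)
        rw [if_neg hii]
        apply Finset.sum_eq_zero
        intro j _
        simp only [havaldef]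
        rw [dif_neg h']
        ring
    · have h0 : ∑ j, aval i j * aval i' j = 0 := by
        apply Finset.sum_eq_zero
        intro j _
        simp only [havaldef]
        rw [dif_neg h]
        ring
      rw [h0]
      by_cases hii : i = i'
      · rw [if_pos hii]
        simp only [hdnatdef]
        rw [dif_neg h]
      · rw [if_neg hii]
  have hnormu : ∀ j, ‖u j‖ ^ 2 = ∑ i, aval i j ^ 2 := by
    intro j
    have h0 := hPar (u j) (u j)
    rw [real_inner_self_eq_norm_sq] at h0
    rw [← h0]
    refine Finset.sum_congr rfl fun i _ => ?_
    rw [ha i j, pow_two]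
  have htotal : ∑ j, ‖u j‖ ^ 2 = ∑ i ∈ Finset.range (min Nh m), dnat i := by
    have h1 : ∑ j, ‖u j‖ ^ 2 = ∑ i : Fin Nh, dnat (i : ℕ) := by
      rw [Finset.sum_congr rfl fun j _ => hnormu j, Finset.sum_comm]
      refine Finset.sum_congr rfl fun i _ => ?_
      have h2 := hsum_aa i i
      rw [if_pos rfl] at h2
      rw [← h2]
      exact Finset.sum_congr rfl fun j _ => pow_two (aval i j)
    rw [h1, Fin.sum_univ_eq_sum_range dnat Nh]
    exact pod_range_cut dnat (min_le_left Nh m) fun i hi => by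
      simp only [hdnatdef]
      rw [dif_neg (not_lt.mpr hi)]
  have hErr : ∀ z : Fin N → EuclideanSpace ℝ (Fin Nh), Orthonormal ℝ z →
      (∑ j : Fin m, ‖u j - (Submodule.orthogonalProjectionOnto (Submodule.span ℝ (Set.range z)) (u j) :
          EuclideanSpace ℝ (Fin Nh))‖ ^ 2)
        = ∑ i ∈ Finset.range (min Nh m), dnat i - ∑ k : Fin N, ∑ j, ⟪z k, u j⟫ ^ 2 := by
    intro z hz
    have h1 : ∀ j, ‖u j - (Submodule.orthogonalProjectionOnto (Submodule.span ℝ (Set.range z)) (u j) :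
        EuclideanSpace ℝ (Fin Nh))‖ ^ 2 = ‖u j‖ ^ 2 - ∑ k, ⟪z k, u j⟫ ^ 2 :=
      fun j => pod_err_sq z hz (u j)
    rw [Finset.sum_congr rfl fun j _ => h1 j, Finset.sum_sub_distrib, htotal, Finset.sum_comm]
  have hζw : ∀ k : Fin N, ζ k = w ⟨(k : ℕ), lt_of_lt_of_le k.isLt hNNh⟩ :=
    fun k => PiLp.ext fun i => hζ k i
  have horthζ : Orthonormal ℝ ζ := by
    rw [orthonormal_iff_ite]
    intro k l
    have h0 : ⟪ζ k, ζ l⟫ = if (⟨(k : ℕ), lt_of_lt_of_le k.isLt hNNh⟩ : Fin Nh)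
        = ⟨(l : ℕ), lt_of_lt_of_le l.isLt hNNh⟩ then (1 : ℝ) else 0 := by
      rw [hζw k, hζw l]
      exact hwinner _ _
    by_cases hkl : k = l
    · subst hkl
      rw [h0, if_pos rfl, if_pos rfl]
    · have hne : (⟨(k : ℕ), lt_of_lt_of_le k.isLt hNNh⟩ : Fin Nh)
          ≠ ⟨(l : ℕ), lt_of_lt_of_le l.isLt hNNh⟩ :=
        fun hc => hkl (Fin.val_injective (Fin.mk_eq_mk.mp hc))
      rw [h0, if_neg hne, if_neg hkl]
  have hζsum : ∀ k : Fin N, ∑ j, ⟪ζ k, u j⟫ ^ 2 = dnat (k : ℕ) := by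
    intro k
    have hk : ∀ j, ⟪ζ k, u j⟫ = aval ⟨(k : ℕ), lt_of_lt_of_le k.isLt hNNh⟩ j := by
      intro j
      rw [hζw k]
      exact ha _ j
    rw [Finset.sum_congr rfl fun j _ => by rw [hk j, pow_two]]
    have h2 := hsum_aa ⟨(k : ℕ), lt_of_lt_of_le k.isLt hNNh⟩ ⟨(k : ℕ), lt_of_lt_of_le k.isLt hNNh⟩
    rw [if_pos rfl] at h2
    exact h2
  have hErrζ : (∑ j : Fin m, ‖u j - (Submodule.orthogonalProjectionOnto (Submodule.span ℝ (Set.range ζ)) (u j) :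
      EuclideanSpace ℝ (Fin Nh))‖ ^ 2)
        = ∑ i ∈ Finset.range (min Nh m), dnat i - ∑ i ∈ Finset.range N, dnat i := by
    rw [hErr ζ horthζ]
    congr 1
    rw [Finset.sum_congr rfl fun k _ => hζsum k]
    exact Fin.sum_univ_eq_sum_range dnat N
  have hsplit : ∑ i ∈ Finset.range (min Nh m), (if i < N then dnat i else 0)
      = ∑ i ∈ Finset.range N, dnat i := by
    rw [pod_range_cut _ hN fun i hi => if_neg (not_lt.mpr hi)]
    exact Finset.sum_congr rfl fun i hi => if_pos (Finset.mem_range.mp hi)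
  have htgt : (∑ i : Fin (min Nh m), if N ≤ (i : ℕ) then σ i ^ 2 else 0)
      = ∑ i ∈ Finset.range (min Nh m), dnat i - ∑ i ∈ Finset.range N, dnat i := by
    have h1 : (∑ i : Fin (min Nh m), if N ≤ (i : ℕ) then σ i ^ 2 else 0)
        = ∑ i ∈ Finset.range (min Nh m), (if N ≤ i then dnat i else 0) := by
      rw [← Fin.sum_univ_eq_sum_range (fun i => if N ≤ i then dnat i else 0) (min Nh m)]
      refine Finset.sum_congr rfl fun i _ => ?_
      by_cases h : N ≤ (i : ℕ)
      · rw [if_pos h, if_pos h]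
        simp only [hdnatdef]
        rw [dif_pos i.isLt]
      · rw [if_neg h, if_neg h]
    rw [h1, eq_sub_iff_add_eq, ← hsplit, ← Finset.sum_add_distrib]
    refine Finset.sum_congr rfl fun i _ => ?_
    by_cases h : N ≤ i
    · rw [if_pos h, if_neg (not_lt.mpr h), add_zero]
    · rw [if_neg h, if_pos (not_le.mp h), zero_add]
  have hbound : ∀ z : Fin N → EuclideanSpace ℝ (Fin Nh), Orthonormal ℝ z →
      ∑ k : Fin N, ∑ j, ⟪z k, u j⟫ ^ 2 ≤ ∑ i ∈ Finset.range N, dnat i := by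
    intro z hz
    set c : Fin N → Fin Nh → ℝ := fun k i => ⟪w i, z k⟫ with hcdef
    set t : Fin Nh → ℝ := fun i => ∑ k, c k i ^ 2 with htdef
    have htnn : ∀ i, 0 ≤ t i := fun i => Finset.sum_nonneg fun k _ => sq_nonneg _
    have ht1 : ∀ i, t i ≤ 1 := by
      intro i
      have hb := hz.sum_inner_products_le (w i) (s := Finset.univ)
      have hn : ‖w i‖ = 1 := horthw.1 i
      calc t i = ∑ k, ‖⟪z k, w i⟫‖ ^ 2 := by
            refine Finset.sum_congr rfl fun k _ => ?_
            simp only [htdef, hcdef]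
            rw [real_inner_comm, Real.norm_eq_abs, sq_abs]
        _ ≤ ‖w i‖ ^ 2 := hb
        _ = 1 := by rw [hn]; norm_num
    have htsum : ∑ i, t i = (N : ℝ) := by
      simp only [htdef]
      rw [Finset.sum_comm]
      have h1 : ∀ k : Fin N, ∑ i, c k i ^ 2 = 1 := by
        intro k
        have h2 := hPar (z k) (z k)
        have hzk : ⟪z k, z k⟫ = 1 := by
          rw [real_inner_self_eq_norm_sq, hz.1 k]; norm_num
        rw [hzk] at h2
        rw [← h2]
        refine Finset.sum_congr rfl fun i _ => ?_
        simp only [hcdef]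
        rw [pow_two]
      rw [Finset.sum_congr rfl fun k _ => h1 k]
      simp
    have hexpand : ∀ k : Fin N, ∑ j, ⟪z k, u j⟫ ^ 2 = ∑ i : Fin Nh, dnat (i : ℕ) * c k i ^ 2 := by
      intro k
      have h1 : ∀ j, ⟪z k, u j⟫ = ∑ i, c k i * aval i j := by
        intro j
        rw [← hPar (z k) (u j)]
        refine Finset.sum_congr rfl fun i _ => ?_
        rw [ha i j]
      calc ∑ j, ⟪z k, u j⟫ ^ 2
          = ∑ j, (∑ i, c k i * aval i j) * (∑ i', c k i' * aval i' j) := by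
            refine Finset.sum_congr rfl fun j _ => by rw [h1 j, pow_two]
        _ = ∑ i, ∑ i', ∑ j, (c k i * aval i j) * (c k i' * aval i' j) :=
            pod_sum_mul_sum_comm (fun i j => c k i * aval i j) (fun i' j => c k i' * aval i' j)
        _ = ∑ i, ∑ i', (c k i * c k i') * ∑ j, aval i j * aval i' j := by
            refine Finset.sum_congr rfl fun i _ => Finset.sum_congr rfl fun i' _ => ?_
            rw [Finset.mul_sum]
            exact Finset.sum_congr rfl fun j _ => by ring
        _ = ∑ i : Fin Nh, dnat (i : ℕ) * c k i ^ 2 := by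
            refine Finset.sum_congr rfl fun i _ => ?_
            calc ∑ i', (c k i * c k i') * ∑ j, aval i j * aval i' j
                = ∑ i', (if i = i' then c k i * c k i' * dnat (i : ℕ) else 0) := by
                  refine Finset.sum_congr rfl fun i' _ => ?_
                  rw [hsum_aa i i']
                  by_cases hii : i = i'
                  · rw [if_pos hii, if_pos hii]
                  · rw [if_neg hii, if_neg hii, mul_zero]
              _ = c k i * c k i * dnat (i : ℕ) := by
                  rw [Finset.sum_ite_eq Finset.univ i
                    (fun i' => c k i * c k i' * dnat (i : ℕ)), if_pos (Finset.mem_univ i)]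
              _ = dnat (i : ℕ) * c k i ^ 2 := by ring
    have hT : ∑ k : Fin N, ∑ j, ⟪z k, u j⟫ ^ 2 = ∑ i : Fin Nh, dnat (i : ℕ) * t i := by
      rw [Finset.sum_congr rfl fun k _ => hexpand k, Finset.sum_comm]
      refine Finset.sum_congr rfl fun i _ => ?_
      simp only [htdef]
      rw [Finset.mul_sum]
    have hindN : ∑ i : Fin Nh, (if (i : ℕ) < N then (1 : ℝ) else 0) = (N : ℝ) := by
      rw [Fin.sum_univ_eq_sum_range (fun i => if i < N then (1 : ℝ) else 0) Nh,
        pod_range_cut _ hNNh fun i hi => if_neg (not_lt.mpr hi),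
        Finset.sum_congr rfl fun i hi => if_pos (Finset.mem_range.mp hi)]
      simp
    have hdN : ∑ i : Fin Nh, (if (i : ℕ) < N then dnat (i : ℕ) else 0)
        = ∑ i ∈ Finset.range N, dnat i := by
      rw [Fin.sum_univ_eq_sum_range (fun i => if i < N then dnat i else 0) Nh,
        pod_range_cut _ hNNh fun i hi => if_neg (not_lt.mpr hi)]
      exact Finset.sum_congr rfl fun i hi => if_pos (Finset.mem_range.mp hi)
    have habacus : ∑ i : Fin Nh, dnat (i : ℕ) * t i ≤ ∑ i ∈ Finset.range N, dnat i := by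
      set p : ℝ := dnat N with hpdef
      have hterm : ∀ i : Fin Nh,
          dnat (i : ℕ) * t i - (if (i : ℕ) < N then dnat (i : ℕ) else 0)
            ≤ p * (t i - (if (i : ℕ) < N then (1 : ℝ) else 0)) := by
        intro i
        by_cases h : (i : ℕ) < N
        · rw [if_pos h, if_pos h]
          have hdi : p ≤ dnat (i : ℕ) := hdmono (Nat.le_of_lt h)
          have hti : t i ≤ 1 := ht1 i
          nlinarith
        · rw [if_neg h, if_neg h]
          have hdi : dnat (i : ℕ) ≤ p := hdmono (not_lt.mp h)
          have hti : 0 ≤ t i := htnn i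
          nlinarith
      have hsum := Finset.sum_le_sum fun i (_ : i ∈ Finset.univ) => hterm i
      rw [Finset.sum_sub_distrib, hdN] at hsum
      have hrhs : ∑ i : Fin Nh, p * (t i - (if (i : ℕ) < N then (1 : ℝ) else 0)) = 0 := by
        rw [← Finset.mul_sum, Finset.sum_sub_distrib, htsum, hindN, sub_self, mul_zero]
      rw [hrhs] at hsum
      linarith
    rw [hT]
    exact habacus
  refine ⟨horthζ, by rw [hErrζ, htgt], ?_⟩
  intro z hz
  rw [hErrζ, hErr z hz]
  have := hbound z hz
  linarith
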